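/- Let v ∈ S_n and let (i,j) ∈ [n]² with j ≠ v(i). Then (i,j) belongs to the graph of the Bruhat interval [v, w₀] (i.e., there exists u with v ≤ u ≤ w₀ and u(i) = j) if and only if (i,j) is sandwiched by a non-inversion of v, meaning there exist k < l with v(k) < v(l), k ≤ i ≤ l, and either v(k) ≤ j ≤ v(l) or v(k) ≥ j ≥ v(l). -/

import Mathlib

open Equiv Finset
open scoped Classical

/-- Bruhat order on the symmetric group on `Fin n`, via the rank-matrix
characterization: `v ≤ w` iff every northeast corner count of `v` is at most
that of `w`. -/
def bruhatLE {n : ℕ} (v w : Equiv.Perm (Fin n)) : Prop :=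
  ∀ i j : Fin n,
    (Finset.univ.filter fun k => k ≤ i ∧ j ≤ v k).card ≤
      (Finset.univ.filter fun k => k ≤ i ∧ j ≤ w k).card

/-- Coxeter length = number of inversions. -/
def len {n : ℕ} (v : Equiv.Perm (Fin n)) : ℕ :=
  (Finset.univ.filter fun p : Fin n × Fin n => p.1 < p.2 ∧ v p.2 < v p.1).card

/-- The graph of the Bruhat interval `[v, w]`. -/
def grInt {n : ℕ} (v w : Equiv.Perm (Fin n)) : Set (Fin n × Fin n) :=
  {p | ∃ u : Equiv.Perm (Fin n), bruhatLE v u ∧ bruhatLE u w ∧ u p.1 = p.2}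

private lemma card_filter_perm_ge {n : ℕ} (w : Equiv.Perm (Fin n)) (j : Fin n) :
    (Finset.univ.filter fun k => j ≤ w k).card = n - j.1 := by
  rw [← Fin.card_Ici j]
  apply Finset.card_bij (fun k _ => w k)
  · intro k hk
    simp only [Finset.mem_filter, Finset.mem_univ, true_and] at hk
    simpa using hk
  · intro a _ b _ h
    exact w.injective h
  · intro b hb
    refine ⟨w⁻¹ b, ?_, by simp⟩
    simp only [Finset.mem_filter, Finset.mem_univ, true_and, Equiv.Perm.coe_inv, Equiv.apply_symm_apply]
    simpa using hb

/-- Every permutation is `≤ w₀` in Bruhat order. -/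
private lemma bruhatLE_revPerm {n : ℕ} (u : Equiv.Perm (Fin n)) : bruhatLE u Fin.revPerm := by
  intro i j
  have h1 : (Finset.univ.filter fun k => k ≤ i ∧ j ≤ u k).card ≤ i.1 + 1 := by
    calc (Finset.univ.filter fun k => k ≤ i ∧ j ≤ u k).card
        ≤ (Finset.Iic i).card := by
          apply Finset.card_le_card
          intro k hk
          simp only [Finset.mem_filter, Finset.mem_univ, true_and] at hk
          simpa using hk.1
      _ = i.1 + 1 := Fin.card_Iic i
  have h2 : (Finset.univ.filter fun k => k ≤ i ∧ j ≤ u k).card ≤ n - j.1 := by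
    rw [← card_filter_perm_ge u j]
    apply Finset.card_le_card
    intro k hk
    simp only [Finset.mem_filter, Finset.mem_univ, true_and] at hk ⊢
    exact hk.2
  have h3 : (Finset.univ.filter fun k => k ≤ i ∧ j ≤ Fin.revPerm k)
      = Finset.Iic (min i j.rev) := by
    ext k
    have hrev : j ≤ (Fin.revPerm k : Fin n) ↔ k ≤ j.rev := by
      rw [Fin.revPerm_apply]
      constructor
      · intro h
        have := Fin.rev_le_rev.mpr h
        rwa [Fin.rev_rev] at this
      · intro h
        have := Fin.rev_le_rev.mpr h
        rwa [Fin.rev_rev] at this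
    simp only [Finset.mem_filter, Finset.mem_univ, true_and, Finset.mem_Iic, le_min_iff, hrev]
  rw [h3, Fin.card_Iic]
  have hmin : (min i j.rev).1 = min i.1 j.rev.1 := by
    rcases le_total i j.rev with h | h
    · rw [min_eq_left h, Nat.min_eq_left h]
    · rw [min_eq_right h, Nat.min_eq_right h]
  have hrv : j.rev.1 = n - (j.1 + 1) := Fin.val_rev j
  have hj := j.isLt
  omega

/-- Right-multiplying by an increasing transposition goes up in Bruhat order. -/
private lemma bruhatLE_mul_swap {n : ℕ} (v : Equiv.Perm (Fin n)) {a b : Fin n}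
    (hab : a < b) (hv : v a < v b) : bruhatLE v (v * Equiv.swap a b) := by
  intro i j
  apply Finset.card_le_card_of_injOn (fun m => if m = b ∧ ¬ (j ≤ v a) then a else m)
  · intro m hm
    simp only [Finset.mem_coe, Finset.mem_filter, Finset.mem_univ, true_and] at hm ⊢
    by_cases hc : m = b ∧ ¬ (j ≤ v a)
    · rw [if_pos hc]
      refine ⟨le_trans hab.le (hc.1 ▸ hm.1), ?_⟩
      rw [Equiv.Perm.mul_apply, Equiv.swap_apply_left]
      exact hc.1 ▸ hm.2
    · rw [if_neg hc]
      refine ⟨hm.1, ?_⟩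
      rw [Equiv.Perm.mul_apply]
      rcases eq_or_ne m a with rfl | hma
      · rw [Equiv.swap_apply_left]
        exact le_trans hm.2 hv.le
      rcases eq_or_ne m b with rfl | hmb
      · rw [Equiv.swap_apply_right]
        push_neg at hc
        exact hc rfl
      · rw [Equiv.swap_apply_of_ne_of_ne hma hmb]
        exact hm.2
  · intro m1 h1 m2 h2 he
    simp only [Finset.mem_coe, Finset.mem_filter, Finset.mem_univ, true_and] at h1 h2
    by_cases c1 : m1 = b ∧ ¬ (j ≤ v a) <;> by_cases c2 : m2 = b ∧ ¬ (j ≤ v a)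
    · simp only [if_pos c1, if_pos c2] at he
      exact c1.1.trans c2.1.symm
    · simp only [if_pos c1, if_neg c2] at he
      rw [← he] at h2
      exact absurd h2.2 c1.2
    · simp only [if_neg c1, if_pos c2] at he
      rw [he] at h1
      exact absurd h1.2 c2.2
    · simp only [if_neg c1, if_neg c2] at he
      exact he

private lemma exists_gt_of_lt_apply {n : ℕ} {v u : Equiv.Perm (Fin n)} (h : bruhatLE v u)
    {i : Fin n} (hlt : v i < u i) : ∃ l, i < l ∧ u i ≤ v l := by
  by_contra hc
  push_neg at hc
  set j := u i with hj
  have hall : ∀ k, j ≤ v k → k < i := by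
    intro k hk
    rcases lt_trichotomy k i with h1 | rfl | h1
    · exact h1
    · exact absurd hk (not_le.mpr hlt)
    · exact absurd hk (not_le.mpr (hc _ h1))
  have hi0 : 0 < i.1 := by
    have h1 := hall (v⁻¹ j) (by simp)
    have h2 : (v⁻¹ j : Fin n).1 < i.1 := h1
    omega
  have hin := i.isLt
  set i' : Fin n := ⟨i.1 - 1, by omega⟩ with hi'
  have key := h i' j
  have hL : (Finset.univ.filter fun k => k ≤ i' ∧ j ≤ v k)
      = Finset.univ.filter fun k => j ≤ v k := by
    ext k
    simp only [Finset.mem_filter, Finset.mem_univ, true_and, and_iff_right_iff_imp]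
    intro hk
    have h1 : k.1 < i.1 := hall k hk
    show k.1 ≤ i.1 - 1
    omega
  have hR : (Finset.univ.filter fun k => k ≤ i' ∧ j ≤ u k)
      ⊆ (Finset.univ.filter fun k => j ≤ u k).erase i := by
    intro k hk
    simp only [Finset.mem_filter, Finset.mem_univ, true_and] at hk
    rw [Finset.mem_erase]
    refine ⟨?_, by simp only [Finset.mem_filter, Finset.mem_univ, true_and]; exact hk.2⟩
    intro he
    have h1 : k.1 ≤ i.1 - 1 := hk.1
    rw [he] at h1
    omega
  have hiu : i ∈ Finset.univ.filter fun k => j ≤ u k := by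
    simp only [Finset.mem_filter, Finset.mem_univ, true_and]
    exact le_of_eq hj
  have hcardR : (Finset.univ.filter fun k => k ≤ i' ∧ j ≤ u k).card
      ≤ (Finset.univ.filter fun k => j ≤ u k).card - 1 := by
    calc (Finset.univ.filter fun k => k ≤ i' ∧ j ≤ u k).card
        ≤ ((Finset.univ.filter fun k => j ≤ u k).erase i).card := Finset.card_le_card hR
      _ = (Finset.univ.filter fun k => j ≤ u k).card - 1 := Finset.card_erase_of_mem hiu
  have hLpos : 0 < (Finset.univ.filter fun k => j ≤ v k).card := by
    refine Finset.card_pos.mpr ⟨v⁻¹ j, ?_⟩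
    simp
  rw [hL] at key
  have e1 := card_filter_perm_ge v j
  have e2 := card_filter_perm_ge u j
  omega

private lemma exists_lt_of_apply_lt {n : ℕ} {v u : Equiv.Perm (Fin n)} (h : bruhatLE v u)
    {i : Fin n} (hlt : u i < v i) : ∃ k, k < i ∧ v k ≤ u i := by
  by_contra hc
  push_neg at hc
  set j := u i with hj
  have hall : ∀ k, k ≤ i → j < v k := by
    intro k hk
    rcases eq_or_lt_of_le hk with rfl | h1
    · exact hlt
    · exact hc k h1
  have hjn : j.1 + 1 < n := by
    have h1 : j.1 < (v i).1 := hlt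
    have h2 := (v i).isLt
    omega
  set j' : Fin n := ⟨j.1 + 1, hjn⟩ with hj'
  have key := h i j'
  have hL : (Finset.univ.filter fun k => k ≤ i ∧ j' ≤ v k) = Finset.Iic i := by
    ext k
    simp only [Finset.mem_filter, Finset.mem_univ, true_and, Finset.mem_Iic,
      and_iff_left_iff_imp]
    intro hk
    have h1 : j.1 < (v k).1 := hall k hk
    show j.1 + 1 ≤ (v k).1
    omega
  have hR : (Finset.univ.filter fun k => k ≤ i ∧ j' ≤ u k) ⊆ (Finset.Iic i).erase i := by
    intro k hk
    simp only [Finset.mem_filter, Finset.mem_univ, true_and] at hk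
    rw [Finset.mem_erase, Finset.mem_Iic]
    refine ⟨?_, hk.1⟩
    intro he
    have h1 : j.1 + 1 ≤ (u k).1 := hk.2
    rw [he, ← hj] at h1
    omega
  have hcardR : (Finset.univ.filter fun k => k ≤ i ∧ j' ≤ u k).card ≤ i.1 := by
    calc (Finset.univ.filter fun k => k ≤ i ∧ j' ≤ u k).card
        ≤ ((Finset.Iic i).erase i).card := Finset.card_le_card hR
      _ = (Finset.Iic i).card - 1 := Finset.card_erase_of_mem (by simp)
      _ = i.1 := by rw [Fin.card_Iic]; omega
  rw [hL, Fin.card_Iic] at key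
  omega

/-- Characterization of the graph of the upper Bruhat interval `[v, w₀]`:
a point `(i, j)` with `j ≠ v i` lies in it iff it is sandwiched by a
non-inversion of `v`. -/
theorem mem_grInt_iff_sandwiched {n : ℕ} (v : Equiv.Perm (Fin n))
    (i j : Fin n) (hij : j ≠ v i) :
    (i, j) ∈ grInt v Fin.revPerm ↔
      ∃ k l : Fin n, k < l ∧ v k < v l ∧ k ≤ i ∧ i ≤ l ∧
        ((v k ≤ j ∧ j ≤ v l) ∨ (v l ≤ j ∧ j ≤ v k)) := by
  constructor
  · rintro ⟨u, hvu, -, hui⟩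
    simp only at hui
    rcases hij.lt_or_gt with hlt | hlt
    · -- j < v i
      obtain ⟨k, hk, hvk⟩ := exists_lt_of_apply_lt hvu (show u i < v i from hui ▸ hlt)
      have hvkj : v k ≤ j := hui ▸ hvk
      exact ⟨k, i, hk, lt_of_le_of_lt hvkj hlt, hk.le, le_refl i, Or.inl ⟨hvkj, hlt.le⟩⟩
    · -- v i < j
      obtain ⟨l, hl, hvl⟩ := exists_gt_of_lt_apply hvu (show v i < u i from hui ▸ hlt)
      have hjvl : j ≤ v l := hui ▸ hvl
      exact ⟨i, l, hl, lt_of_lt_of_le hlt hjvl, le_refl i, hl.le, Or.inl ⟨hlt.le, hjvl⟩⟩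
  · rintro ⟨k, l, hkl, hvkl, hki, hil, hjmem⟩
    have hj' : v k ≤ j ∧ j ≤ v l := by
      rcases hjmem with h | h
      · exact h
      · exact absurd (le_trans h.1 h.2) (not_le.mpr hvkl)
    obtain ⟨hvkj, hjvl⟩ := hj'
    have hvp : v (v⁻¹ j) = j := v.apply_symm_apply j
    have hpi : v⁻¹ j ≠ i := by
      intro he
      rw [he] at hvp
      exact hij hvp.symm
    rcases hij.lt_or_gt with hlt | hlt
    · -- j < v i ; need k < i with v k ≤ j
      have hk_lt : k < i := by
        rcases lt_or_eq_of_le hki with h | rfl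
        · exact h
        · exact absurd hvkj (not_le.mpr hlt)
      rcases lt_or_gt_of_ne hpi with hpi' | hpi'
      · -- position of j is left of i: single swap
        refine ⟨v * Equiv.swap (v⁻¹ j) i,
          bruhatLE_mul_swap v hpi' (by rw [hvp]; exact hlt), bruhatLE_revPerm _, ?_⟩
        show (v * Equiv.swap (v⁻¹ j) i) i = j
        rw [Equiv.Perm.mul_apply, Equiv.swap_apply_right, hvp]
      · -- position of j is right of i: two swaps via k
        have hkp : k ≠ v⁻¹ j := by
          intro he
          rw [he] at hk_lt
          exact absurd hpi' (not_lt.mpr hk_lt.le)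
        have hvkj' : v k < j := by
          rcases lt_or_eq_of_le hvkj with h | h
          · exact h
          · exact absurd (v.injective (by rw [hvp, h])) hkp
        set u1 := v * Equiv.swap k i with hu1
        have h1 : bruhatLE v u1 := bruhatLE_mul_swap v hk_lt (lt_trans hvkj' hlt)
        have hu1i : u1 i = v k := by
          rw [hu1, Equiv.Perm.mul_apply, Equiv.swap_apply_right]
        have hu1p : u1 (v⁻¹ j) = j := by
          rw [hu1, Equiv.Perm.mul_apply,
            Equiv.swap_apply_of_ne_of_ne (Ne.symm hkp) hpi'.ne', hvp]
        have h2 : bruhatLE u1 (u1 * Equiv.swap i (v⁻¹ j)) :=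
          bruhatLE_mul_swap u1 hpi' (by rw [hu1i, hu1p]; exact hvkj')
        refine ⟨u1 * Equiv.swap i (v⁻¹ j), fun a b => le_trans (h1 a b) (h2 a b),
          bruhatLE_revPerm _, ?_⟩
        show (u1 * Equiv.swap i (v⁻¹ j)) i = j
        rw [Equiv.Perm.mul_apply, Equiv.swap_apply_left, hu1p]
    · -- v i < j ; need i < l with j ≤ v l
      have hl_gt : i < l := by
        rcases lt_or_eq_of_le hil with h | rfl
        · exact h
        · exact absurd hjvl (not_le.mpr hlt)
      rcases lt_or_gt_of_ne hpi with hpi' | hpi'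
      · -- position of j is left of i: two swaps via l
        have hlp : l ≠ v⁻¹ j := by
          intro he
          rw [he] at hl_gt
          exact absurd hpi' (not_lt.mpr hl_gt.le)
        have hjvl' : j < v l := by
          rcases lt_or_eq_of_le hjvl with h | h
          · exact h
          · exact absurd (v.injective (by rw [hvp, ← h])) hlp
        set u1 := v * Equiv.swap i l with hu1
        have h1 : bruhatLE v u1 := bruhatLE_mul_swap v hl_gt (lt_trans hlt hjvl')
        have hu1i : u1 i = v l := by
          rw [hu1, Equiv.Perm.mul_apply, Equiv.swap_apply_left]
        have hu1p : u1 (v⁻¹ j) = j := by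
          rw [hu1, Equiv.Perm.mul_apply,
            Equiv.swap_apply_of_ne_of_ne hpi'.ne (Ne.symm hlp), hvp]
        have h2 : bruhatLE u1 (u1 * Equiv.swap (v⁻¹ j) i) :=
          bruhatLE_mul_swap u1 hpi' (by rw [hu1i, hu1p]; exact hjvl')
        refine ⟨u1 * Equiv.swap (v⁻¹ j) i, fun a b => le_trans (h1 a b) (h2 a b),
          bruhatLE_revPerm _, ?_⟩
        show (u1 * Equiv.swap (v⁻¹ j) i) i = j
        rw [Equiv.Perm.mul_apply, Equiv.swap_apply_right, hu1p]
      · -- position of j is right of i: single swap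
        refine ⟨v * Equiv.swap i (v⁻¹ j),
          bruhatLE_mul_swap v hpi' (by rw [hvp]; exact hlt), bruhatLE_revPerm _, ?_⟩
        show (v * Equiv.swap i (v⁻¹ j)) i = j
        rw [Equiv.Perm.mul_apply, Equiv.swap_apply_left, hvp]
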